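/- In the interpolating (noiseless) linear regime, i.e., when w ∈ ℝ^m satisfies y_i = x_iᵀw for all i, the SGD iterates satisfy, for every T ≥ 1, the identity ‖w − w_0‖² = ‖w − w_T‖² + η Σ_{i=1}^T (2 − η‖x_i‖²) e_i², where e_i := y_i − x_iᵀw_{i−1}. -/
import Mathlib


open scoped RealInnerProductSpace

lemma step_aux {m : ℕ} (v u : EuclideanSpace ℝ (Fin m)) (c : ℝ) :
    ‖v - c • u‖ ^ 2 = ‖v‖ ^ 2 - 2 * c * ⟪u, v⟫ + c ^ 2 * ‖u‖ ^ 2 := by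
  rw [norm_sub_sq_real, norm_smul, real_inner_smul_right, real_inner_comm]
  rw [mul_pow, Real.norm_eq_abs, sq_abs]
  ring

/-- fundamental identity for SGD in the interpolating/noiseless linear
regime, Eq. (13) of the paper. -/
theorem stmt_4 {m : ℕ} (x : ℕ → EuclideanSpace ℝ (Fin m)) (y : ℕ → ℝ)
    (η : ℝ) (hη : 0 < η)
    (w₀ : EuclideanSpace ℝ (Fin m))
    (w : ℕ → EuclideanSpace ℝ (Fin m)) (hw0 : w 0 = w₀)
    (hupd : ∀ i : ℕ,
      w (i + 1) = w i + (η * (y (i + 1) - ⟪x (i + 1), w i⟫)) • x (i + 1))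
    (wstar : EuclideanSpace ℝ (Fin m))
    (hdata : ∀ i : ℕ, y (i + 1) = ⟪x (i + 1), wstar⟫) :
    ∀ T : ℕ, 1 ≤ T →
      ‖wstar - w₀‖ ^ 2 =
        ‖wstar - w T‖ ^ 2
          + η * ∑ i ∈ Finset.range T,
              (2 - η * ‖x (i + 1)‖ ^ 2) * (y (i + 1) - ⟪x (i + 1), w i⟫) ^ 2 := by
  have key : ∀ T : ℕ,
      ‖wstar - w₀‖ ^ 2 =
        ‖wstar - w T‖ ^ 2
          + η * ∑ i ∈ Finset.range T,
              (2 - η * ‖x (i + 1)‖ ^ 2) * (y (i + 1) - ⟪x (i + 1), w i⟫) ^ 2 := by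
    intro T
    induction T with
    | zero => simp [hw0]
    | succ n ih =>
        rw [Finset.sum_range_succ, ih]
        have hstep : ‖wstar - w (n + 1)‖ ^ 2 =
            ‖wstar - w n‖ ^ 2
              - η * ((2 - η * ‖x (n + 1)‖ ^ 2) *
                (y (n + 1) - ⟪x (n + 1), w n⟫) ^ 2) := by
          have hv : wstar - w (n + 1)
              = (wstar - w n) - (η * (y (n + 1) - ⟪x (n + 1), w n⟫)) • x (n + 1) := by
            rw [hupd n]; abel
          have hinner : ⟪x (n + 1), wstar - w n⟫ = y (n + 1) - ⟪x (n + 1), w n⟫ := by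
            rw [inner_sub_right, hdata n]
          rw [hv, step_aux, hinner]
          ring
        rw [hstep]
        ring
  exact fun T _ => key T
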